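/- Let n ≥ 2, let ρ₁, …, ρₙ ∈ (0,1) be real, and let t ∈ (−1,1) be real. Then the (n−1)-fold iterated improper integral ∫₀¹⋯∫₀¹ (∏_{i=1}^{n−1} z_i^{ρ_i−1}(1−z_i)^{−ρ_i}) · (1 − t·z₁⋯z_{n−1})^{−ρₙ} dz₁⋯dz_{n−1} converges and equals (∏_{i=1}^{n−1} Γ(ρ_i)Γ(1−ρ_i)) · ₙF_{n−1}(ρ₁,…,ρₙ; 1,…,1; t), where ₙF_{n−1}(ρ₁,…,ρₙ;1,…,1;t) = Σ_{k≥0} (ρ₁)_k⋯(ρₙ)_k/(k!)ⁿ · t^k. (This is the Euler-integral formula underlying the generalized Euler integral presentation of the mirror periods.) -/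

import Mathlib

open MeasureTheory Polynomial

open Set

lemma poch_succ (a : ℝ) (k : ℕ) :
    (ascPochhammer ℝ (k+1)).eval a = (ascPochhammer ℝ k).eval a * (a + k) := by
  simp [ascPochhammer_succ_right]

lemma gamma_poch (a : ℝ) (ha : 0 < a) (k : ℕ) :
    Real.Gamma (a + k) = (ascPochhammer ℝ k).eval a * Real.Gamma a := by
  induction k with
  | zero => simp
  | succ k ih =>
    have h2 : a + (k : ℝ) ≠ 0 := by positivity
    rw [Nat.cast_add, Nat.cast_one, ← add_assoc, Real.Gamma_add_one h2, ih, poch_succ]; ring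

lemma beta_Ioo (a b : ℝ) (ha : 0 < a) (hb : 0 < b) :
    IntegrableOn (fun x : ℝ => x ^ (a-1) * (1-x) ^ (b-1)) (Ioo 0 1) volume ∧
    ∫ x in Ioo (0:ℝ) 1, x ^ (a-1) * (1-x) ^ (b-1)
      = Real.Gamma a * Real.Gamma b / Real.Gamma (a+b) := by
  have hc : IntervalIntegrable (fun x : ℝ => (x:ℂ) ^ ((a:ℂ)-1) * ((1:ℂ)-x) ^ ((b:ℂ)-1))
      volume 0 1 := Complex.betaIntegral_convergent (by simpa using ha) (by simpa using hb)
  have heq : ∀ x ∈ Ioo (0:ℝ) 1,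
      ‖(x:ℂ) ^ ((a:ℂ)-1) * ((1:ℂ)-x) ^ ((b:ℂ)-1)‖ = x ^ (a-1) * (1-x) ^ (b-1) := by
    intro x hx
    rw [norm_mul]
    have h1 : ((1:ℂ) - x) = ((1 - x : ℝ) : ℂ) := by push_cast; ring
    rw [h1, Complex.norm_cpow_eq_rpow_re_of_pos hx.1,
      Complex.norm_cpow_eq_rpow_re_of_pos (by linarith [hx.2])]
    norm_num
  have hint : IntegrableOn (fun x : ℝ => x ^ (a-1) * (1-x) ^ (b-1)) (Ioo 0 1) volume := by
    have h1 : IntegrableOn (fun x : ℝ =>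
        ‖(x:ℂ) ^ ((a:ℂ)-1) * ((1:ℂ)-x) ^ ((b:ℂ)-1)‖) (Ioc 0 1) volume := by
      have := hc.norm
      rw [intervalIntegrable_iff_integrableOn_Ioc_of_le (by norm_num : (0:ℝ) ≤ 1)] at this
      exact this
    exact (h1.mono_set Ioo_subset_Ioc_self).congr_fun heq measurableSet_Ioo
  refine ⟨hint, ?_⟩
  have hβ := Complex.Gamma_mul_Gamma_eq_betaIntegral
    (s := (a:ℂ)) (t := (b:ℂ)) (by simpa using ha) (by simpa using hb)
  have hre : Complex.betaIntegral (a:ℂ) (b:ℂ)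
      = ((∫ x in (0:ℝ)..1, x ^ (a-1) * (1-x) ^ (b-1) : ℝ) : ℂ) := by
    rw [← intervalIntegral.integral_ofReal]
    unfold Complex.betaIntegral
    refine intervalIntegral.integral_congr fun x hx => ?_
    rw [uIcc_of_le (by norm_num : (0:ℝ) ≤ 1)] at hx
    push_cast
    rw [Complex.ofReal_cpow hx.1, Complex.ofReal_cpow (by linarith [hx.2] : (0:ℝ) ≤ 1 - x)]
    push_cast
    ring
  have hiv : ∫ x in (0:ℝ)..1, x ^ (a-1) * (1-x) ^ (b-1)
      = ∫ x in Ioo (0:ℝ) 1, x ^ (a-1) * (1-x) ^ (b-1) := by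
    rw [intervalIntegral.integral_of_le (by norm_num : (0:ℝ) ≤ 1),
      integral_Ioc_eq_integral_Ioo]
  rw [hre] at hβ
  have hab : (0:ℝ) < a + b := by linarith
  have hG : Real.Gamma (a+b) ≠ 0 := (Real.Gamma_pos_of_pos hab).ne'
  have : ((Real.Gamma a * Real.Gamma b : ℝ) : ℂ)
      = ((Real.Gamma (a+b) * ∫ x in (0:ℝ)..1, x ^ (a-1) * (1-x) ^ (b-1) : ℝ) : ℂ) := by
    rw [Complex.ofReal_mul, Complex.ofReal_mul, ← Complex.Gamma_ofReal, ← Complex.Gamma_ofReal,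
      ← Complex.Gamma_ofReal, Complex.ofReal_add, hβ]
  have hr := Complex.ofReal_injective this
  rw [← hiv]
  field_simp at hr ⊢
  linarith [hr]

noncomputable def cb (b : ℝ) (k : ℕ) : ℝ := (ascPochhammer ℝ k).eval b / k.factorial

lemma cb_zero (b : ℝ) : cb b 0 = 1 := by simp [cb]

lemma cb_succ (b : ℝ) (k : ℕ) : cb b (k+1) = cb b k * ((b + k) / (k + 1)) := by
  rw [cb, cb, poch_succ, Nat.factorial_succ]
  push_cast
  rw [div_mul_div_comm, mul_comm ((k:ℝ)+1)]

lemma cb_pos {b : ℝ} (hb : 0 < b) (k : ℕ) : 0 < cb b k :=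
  div_pos (ascPochhammer_pos k b hb) (by positivity)

lemma cb_ratio_le {b : ℝ} (hb1 : b ≤ 1) (k : ℕ) : (b + k) / (k + 1) ≤ 1 := by
  rw [div_le_one (by positivity)]; linarith

lemma cb_le_one {b : ℝ} (hb : 0 < b) (hb1 : b ≤ 1) (k : ℕ) : cb b k ≤ 1 := by
  induction k with
  | zero => simp [cb_zero]
  | succ k ih =>
    rw [cb_succ]
    calc cb b k * ((b + k) / (k + 1)) ≤ 1 * 1 := by
          apply mul_le_mul ih (cb_ratio_le hb1 k) (by positivity) zero_le_one
      _ = 1 := by ring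

lemma cb_summable {b : ℝ} (hb : 0 < b) (hb1 : b ≤ 1) {y : ℝ} (hy : |y| < 1) :
    Summable (fun k : ℕ => cb b k * y ^ k) := by
  apply summable_of_ratio_norm_eventually_le hy
  filter_upwards with k
  have h1 : 0 < cb b k := cb_pos hb k
  have h2 : 0 ≤ (b + k) / ((k:ℝ) + 1) := by positivity
  have e1 : ‖cb b (k+1) * y ^ (k+1)‖ = (b + (k:ℝ)) / (k + 1) * (cb b k * |y| ^ k) * |y| := by
    rw [Real.norm_eq_abs, cb_succ, abs_mul, abs_mul, abs_pow, abs_of_pos h1, abs_of_nonneg h2,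
      pow_succ]
    ring
  have e2 : ‖cb b k * y ^ k‖ = cb b k * |y| ^ k := by
    rw [Real.norm_eq_abs, abs_mul, abs_pow, abs_of_pos h1]
  rw [e1, e2]
  calc (b + (k:ℝ)) / (k + 1) * (cb b k * |y| ^ k) * |y|
      ≤ 1 * (cb b k * |y| ^ k) * |y| := by
        have h3 := cb_ratio_le hb1 k
        gcongr
    _ = |y| * (cb b k * |y| ^ k) := by ring

lemma cb_deriv_summable {b : ℝ} (hb : 0 < b) (hb1 : b ≤ 1) {r : ℝ} (hr0 : 0 < r) (hr1 : r < 1) :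
    Summable (fun k : ℕ => cb b k * (k * r ^ (k-1))) := by
  have hs : Summable (fun k : ℕ => r⁻¹ * ((k:ℝ) ^ 1 * r ^ k)) := by
    exact (summable_pow_mul_geometric_of_norm_lt_one (R := ℝ) 1
      (by rwa [Real.norm_eq_abs, abs_of_pos hr0])).mul_left _
  apply Summable.of_nonneg_of_le (fun k => mul_nonneg (cb_pos hb k).le (by positivity)) (fun k => ?_) hs
  match k with
  | 0 => norm_num
  | (k+1) =>
    have e1 : r⁻¹ * ((((k+1):ℕ):ℝ) ^ 1 * r ^ (k+1)) = ((k:ℝ)+1) * r ^ k := by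
      push_cast
      rw [pow_succ]
      field_simp
      ring
    rw [e1, Nat.add_sub_cancel]
    push_cast
    calc cb b (k+1) * (((k:ℝ)+1) * r ^ k) ≤ 1 * (((k:ℝ)+1) * r ^ k) := by
          apply mul_le_mul_of_nonneg_right (cb_le_one hb hb1 _) (by positivity)
      _ = ((k:ℝ)+1) * r ^ k := by ring

lemma binomial_deriv {b : ℝ} (hb : 0 < b) (hb1 : b ≤ 1) {y : ℝ} (hy : |y| < 1) :
    HasDerivAt (fun x => ∑' k : ℕ, cb b k * x ^ k)
      (∑' k : ℕ, cb b k * ((k:ℝ) * y ^ (k-1))) y := by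
  set r : ℝ := (1 + |y|) / 2 with hr
  have hy0 := abs_nonneg y
  have hr0 : 0 < r := by rw [hr]; positivity
  have hyr : |y| < r := by rw [hr]; linarith
  have hr1 : r < 1 := by rw [hr]; linarith
  apply hasDerivAt_tsum_of_isPreconnected (cb_deriv_summable hb hb1 hr0 hr1)
    (isOpen_Ioo (a := -r) (b := r)) ((convex_Ioo _ _).isPreconnected)
    (g := fun k x => cb b k * x ^ k) (g' := fun k x => cb b k * ((k:ℝ) * x ^ (k-1)))
    (fun k z _ => (hasDerivAt_pow k z).const_mul _) (fun k z hz => ?_)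
    (mem_Ioo.2 ⟨by linarith, hr0⟩) (cb_summable hb hb1 (by norm_num)) (abs_lt.1 hyr)
  have hzr : |z| ≤ r := le_of_lt (abs_lt.2 hz)
  have h1 : 0 < cb b k := cb_pos hb k
  rw [Real.norm_eq_abs, abs_mul, abs_mul, abs_pow, abs_of_pos h1, Nat.abs_cast]
  gcongr

lemma binomial_ode {b : ℝ} (hb : 0 < b) (hb1 : b ≤ 1) {y : ℝ} (hy : |y| < 1) :
    b * (∑' k : ℕ, cb b k * y ^ k)
      = (1 - y) * (∑' k : ℕ, cb b k * ((k:ℝ) * y ^ (k-1))) := by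
  set A : ℕ → ℝ := fun k => cb b k * ((k:ℝ) * y ^ (k-1)) with hA
  have hsum : Summable A := by
    set r : ℝ := (1 + |y|) / 2 with hr
    have hy0 := abs_nonneg y
    have hr0 : 0 < r := by rw [hr]; positivity
    have hyr : |y| ≤ r := by rw [hr]; linarith
    have hr1 : r < 1 := by rw [hr]; linarith
    apply Summable.of_norm_bounded (cb_deriv_summable hb hb1 hr0 hr1)
    intro k
    have h1 : 0 < cb b k := cb_pos hb k
    rw [Real.norm_eq_abs, hA, abs_mul, abs_mul, abs_pow, abs_of_pos h1, Nat.abs_cast]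
    gcongr
  have hT : HasSum A (∑' k, A k) := hsum.hasSum
  have h1 : HasSum (fun k => A (k + 1)) (∑' k, A k) := by
    have h0 : A 0 = 0 := by simp [hA]
    rw [← sub_zero (∑' k, A k)]
    rw [(hasSum_nat_add_iff (f := A) 1)]
    simpa [h0] using hT
  have h2 : HasSum (fun k : ℕ => (b + k) * (cb b k * y ^ k)) (∑' k, A k) := by
    refine h1.congr_fun fun k => ?_
    have hk1 : ((k:ℝ) + 1) ≠ 0 := by positivity
    rw [hA]
    simp only [cb_succ, Nat.add_sub_cancel]
    push_cast
    field_simp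
  have h3 : HasSum (fun k : ℕ => (k:ℝ) * (cb b k * y ^ k)) (y * ∑' k, A k) := by
    refine (hT.mul_left y).congr_fun fun k => ?_
    match k with
    | 0 => simp [hA]
    | (k+1) =>
      rw [hA]
      simp only [Nat.add_sub_cancel]
      push_cast
      rw [pow_succ]
      ring
  have h4 := h2.sub h3
  have h5 : HasSum (fun k : ℕ => b * (cb b k * y ^ k))
      ((1 - y) * ∑' k, A k) := by
    have e : (fun k : ℕ => b * (cb b k * y ^ k))
        = fun k : ℕ => (b + k) * (cb b k * y ^ k) - (k:ℝ) * (cb b k * y ^ k) := by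
      funext k; ring
    have hv : (1 - y) * ∑' k, A k = (∑' k, A k) - y * ∑' k, A k := by ring
    rw [e, hv]
    exact h4
  have h6 : HasSum (fun k : ℕ => b * (cb b k * y ^ k))
      (b * ∑' k : ℕ, cb b k * y ^ k) := (cb_summable hb hb1 hy).hasSum.mul_left b
  exact h6.unique h5

lemma binomial_deriv_zero {b : ℝ} (hb : 0 < b) (hb1 : b ≤ 1) {y : ℝ} (hy : |y| < 1) :
    HasDerivAt (fun x => (1 - x) ^ b * ∑' k : ℕ, cb b k * x ^ k) 0 y := by
  obtain ⟨hy1, hy2⟩ := abs_lt.1 hy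
  have h1y : 0 < 1 - y := by linarith
  have d1 : HasDerivAt (fun x : ℝ => (1 - x) ^ b) (b * (1 - y) ^ (b - 1) * (-1)) y := by
    exact (Real.hasDerivAt_rpow_const (x := 1 - y) (p := b) (Or.inl h1y.ne')).comp y
      ((hasDerivAt_id y).const_sub 1)
  have d2 := binomial_deriv hb hb1 hy
  have d3 : HasDerivAt (fun x => (1 - x) ^ b * ∑' k : ℕ, cb b k * x ^ k)
      (b * (1 - y) ^ (b - 1) * -1 * ∑' (k : ℕ), cb b k * y ^ k +
        (1 - y) ^ b * ∑' (k : ℕ), cb b k * ((k:ℝ) * y ^ (k - 1))) y := d1.mul d2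
  convert d3 using 1
  have hpow : (1 - y) ^ (b - 1) = (1 - y) ^ b / (1 - y) := by
    rw [Real.rpow_sub h1y, Real.rpow_one]
  rw [hpow]
  have hode := binomial_ode hb hb1 hy
  field_simp
  simp only [mul_assoc] at hode ⊢
  linear_combination ((1 - y) ^ b) * hode

lemma binomial_hasSum {b : ℝ} (hb : 0 < b) (hb1 : b ≤ 1) {u : ℝ} (hu : |u| < 1) :
    HasSum (fun k : ℕ => cb b k * u ^ k) ((1 - u) ^ (-b)) := by
  obtain ⟨hu1, hu2⟩ := abs_lt.1 hu
  have h1u : 0 < 1 - u := by linarith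
  set g : ℝ → ℝ := fun x => (1 - x) ^ b * ∑' k : ℕ, cb b k * x ^ k with hg
  have habs : ∀ x : ℝ, x ∈ Set.Icc (min 0 u) (max 0 u) → |x| < 1 := by
    intro x hx
    rw [abs_lt]
    rcases le_total 0 u with h | h
    · rw [min_eq_left h, max_eq_right h] at hx
      exact ⟨by linarith [hx.1], by linarith [hx.2]⟩
    · rw [min_eq_right h, max_eq_left h] at hx
      exact ⟨by linarith [hx.1], by linarith [hx.2]⟩
  have hgu : g u = g 0 := by
    rcases le_total 0 u with h | h
    · have := constant_of_has_deriv_right_zero (f := g) (a := 0) (b := u)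
        (fun x hx => (binomial_deriv_zero hb hb1 (habs x (by
          rw [min_eq_left h, max_eq_right h]; exact hx))).continuousAt.continuousWithinAt)
        (fun x hx => (binomial_deriv_zero hb hb1 (habs x (by
          rw [min_eq_left h, max_eq_right h]; exact ⟨hx.1, hx.2.le⟩))).hasDerivWithinAt)
      exact this u (Set.right_mem_Icc.2 h)
    · have := constant_of_has_deriv_right_zero (f := g) (a := u) (b := 0)
        (fun x hx => (binomial_deriv_zero hb hb1 (habs x (by
          rw [min_eq_right h, max_eq_left h]; exact hx))).continuousAt.continuousWithinAt)
        (fun x hx => (binomial_deriv_zero hb hb1 (habs x (by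
          rw [min_eq_right h, max_eq_left h]; exact ⟨hx.1, hx.2.le⟩))).hasDerivWithinAt)
      exact (this 0 (Set.right_mem_Icc.2 h)).symm
  have hg0 : g 0 = 1 := by
    rw [hg]
    simp only [sub_zero, Real.one_rpow, one_mul]
    rw [tsum_eq_single 0 (fun k hk => by simp [zero_pow hk])]
    simp [cb_zero]
  have hS : ∑' k : ℕ, cb b k * u ^ k = (1 - u) ^ (-b) := by
    have hbpos : 0 < (1 - u) ^ b := Real.rpow_pos_of_pos h1u b
    have hmul : (1 - u) ^ b * (∑' k : ℕ, cb b k * u ^ k) = 1 := hgu.trans hg0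
    rw [Real.rpow_neg h1u.le]
    field_simp
    linear_combination hmul
  rw [← hS]
  exact (cb_summable hb hb1 hu).hasSum

lemma cube_prod {N : ℕ} (g : Fin N → ℝ → ℝ) (hg : ∀ i, IntegrableOn (g i) (Ioo 0 1) volume) :
    IntegrableOn (fun z : Fin N → ℝ => ∏ i, g i (z i)) (Set.univ.pi fun _ => Ioo (0:ℝ) 1)
      volume ∧
    ∫ z : Fin N → ℝ in Set.univ.pi fun _ => Ioo (0:ℝ) 1, ∏ i, g i (z i)
      = ∏ i, ∫ x in Ioo (0:ℝ) 1, g i x := by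
  have hC : MeasurableSet (Set.univ.pi fun _ : Fin N => Ioo (0:ℝ) 1) :=
    MeasurableSet.univ_pi (fun i => measurableSet_Ioo)
  have hind : (Set.univ.pi fun _ : Fin N => Ioo (0:ℝ) 1).indicator
      (fun z => ∏ i, g i (z i)) = fun z => ∏ i, (Ioo (0:ℝ) 1).indicator (g i) (z i) := by
    funext z
    by_cases hz : z ∈ Set.univ.pi fun _ : Fin N => Ioo (0:ℝ) 1
    · rw [Set.indicator_of_mem hz]
      exact Finset.prod_congr rfl fun i _ =>
        (Set.indicator_of_mem (hz i (Set.mem_univ i)) _).symm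
    · rw [Set.indicator_of_notMem hz]
      rw [Set.mem_pi] at hz; push_neg at hz
      obtain ⟨j, _, hj⟩ := hz
      exact (Finset.prod_eq_zero (Finset.mem_univ j) (Set.indicator_of_notMem hj _)).symm
  have hInt : ∀ i, Integrable ((Ioo (0:ℝ) 1).indicator (g i)) volume := fun i =>
    (integrable_indicator_iff measurableSet_Ioo).2 (hg i)
  have h2 : Integrable (fun z : Fin N → ℝ => ∏ i, (Ioo (0:ℝ) 1).indicator (g i) (z i))
      volume := Integrable.fintype_prod (𝕜 := ℝ) hInt
  constructor
  · exact (integrable_indicator_iff hC).1 (hind ▸ h2)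
  · rw [← integral_indicator hC, hind, volume_pi,
      integral_fintype_prod_eq_prod (ι := Fin N) (fun i => (Ioo (0:ℝ) 1).indicator (g i))]
    exact Finset.prod_congr rfl fun i _ => integral_indicator measurableSet_Ioo

lemma prod_split {n : ℕ} (hn : 1 ≤ n) (g : Fin n → ℝ) :
    ∏ i : Fin n, g i
      = (∏ i : Fin (n-1), g (Fin.castLE (Nat.sub_le n 1) i)) * g ⟨n-1, by omega⟩ := by
  obtain ⟨m, rfl⟩ : ∃ m, n = m + 1 := ⟨n-1, by omega⟩
  rw [Fin.prod_univ_castSucc]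
  rfl

theorem main_aux {N : ℕ} (σ : Fin N → ℝ) (hσ0 : ∀ i, 0 < σ i) (hσ1 : ∀ i, σ i < 1)
    (b : ℝ) (hb0 : 0 < b) (hb1 : b < 1) (t : ℝ) (hat : |t| < 1) :
    IntegrableOn (fun z : Fin N → ℝ =>
        (∏ i : Fin N, (z i) ^ (σ i - 1) * (1 - z i) ^ (-(σ i))) *
        (1 - t * ∏ i : Fin N, z i) ^ (-b))
      (Set.univ.pi fun _ : Fin N => Ioo (0:ℝ) 1) volume ∧
    ∫ z : Fin N → ℝ in Set.univ.pi fun _ : Fin N => Ioo (0:ℝ) 1,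
        (∏ i : Fin N, (z i) ^ (σ i - 1) * (1 - z i) ^ (-(σ i))) *
        (1 - t * ∏ i : Fin N, z i) ^ (-b) =
      (∏ i : Fin N, Real.Gamma (σ i) * Real.Gamma (1 - σ i)) *
        ∑' k : ℕ, ((∏ i : Fin N, (ascPochhammer ℝ k).eval (σ i)) * (ascPochhammer ℝ k).eval b) /
          ((k.factorial : ℝ)) ^ (N+1) * t ^ k := by
  have hb1' : b ≤ 1 := hb1.le
  set C : Set (Fin N → ℝ) := Set.univ.pi fun _ : Fin N => Ioo (0:ℝ) 1 with hC'
  have hCm : MeasurableSet C := MeasurableSet.univ_pi fun _ => measurableSet_Ioo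
  set f : (Fin N → ℝ) → ℝ := fun z =>
    (∏ i : Fin N, (z i) ^ (σ i - 1) * (1 - z i) ^ (-(σ i))) *
      (1 - t * ∏ i : Fin N, z i) ^ (-b) with hf'
  -- the one-dimensional factors
  set g : ℕ → Fin N → ℝ → ℝ := fun k i x => x ^ (σ i + k - 1) * (1 - x) ^ (-(σ i)) with hg'
  have hgbeta : ∀ (k : ℕ) (i : Fin N),
      (fun x : ℝ => x ^ (σ i + (k:ℝ) - 1) * (1 - x) ^ ((1 - σ i) - 1)) = g k i := by
    intro k i
    funext x
    rw [hg']
    norm_num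
  have hgInt : ∀ (k : ℕ) (i : Fin N), IntegrableOn (g k i) (Ioo 0 1) volume := by
    intro k i
    have := (beta_Ioo (σ i + k) (1 - σ i) (by have := hσ0 i; positivity) (by linarith [hσ1 i])).1
    rwa [hgbeta k i] at this
  have hgVal : ∀ (k : ℕ) (i : Fin N), ∫ x in Ioo (0:ℝ) 1, g k i x
      = cb (σ i) k * (Real.Gamma (σ i) * Real.Gamma (1 - σ i)) := by
    intro k i
    have h := (beta_Ioo (σ i + k) (1 - σ i) (by have := hσ0 i; positivity) (by linarith [hσ1 i])).2
    rw [hgbeta k i] at h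
    rw [h, gamma_poch (σ i) (hσ0 i) k]
    have he : σ i + (k:ℝ) + (1 - σ i) = (k:ℝ) + 1 := by ring
    rw [he, Real.Gamma_nat_eq_factorial, cb]
    have : ((k.factorial : ℝ)) ≠ 0 := by positivity
    field_simp
  -- the series terms
  set F : ℕ → (Fin N → ℝ) → ℝ := fun k z => (cb b k * t ^ k) * ∏ i : Fin N, g k i (z i)
    with hF'
  have hcube := fun k : ℕ => cube_prod (g k) (hgInt k)
  have hFint : ∀ k, Integrable (F k) (volume.restrict C) := by
    intro k
    exact ((hcube k).1).const_mul _
  have hFval : ∀ k, ∫ z in C, F k z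
      = (cb b k * t ^ k) * ∏ i : Fin N, (cb (σ i) k *
          (Real.Gamma (σ i) * Real.Gamma (1 - σ i))) := by
    intro k
    rw [hF']
    rw [integral_const_mul]
    rw [(hcube k).2]
    congr 1
    exact Finset.prod_congr rfl fun i _ => hgVal k i
  -- nonnegativity of g on the cube
  have hzC : ∀ z : Fin N → ℝ, z ∈ C → ∀ i : Fin N, z i ∈ Ioo (0:ℝ) 1 := by
    intro z hz i
    exact hz i (Set.mem_univ i)
  have hgnn : ∀ (k : ℕ) (z : Fin N → ℝ), z ∈ C → ∀ i : Fin N, 0 ≤ g k i (z i) := by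
    intro k z hz i
    obtain ⟨h1, h2⟩ := hzC z hz i
    exact mul_nonneg (Real.rpow_nonneg h1.le _) (Real.rpow_nonneg (by linarith) _)
  -- the norm integrals
  have hFnorm : ∀ k, ∫ z in C, ‖F k z‖
      = |cb b k * t ^ k| * ∏ i : Fin N, (cb (σ i) k *
          (Real.Gamma (σ i) * Real.Gamma (1 - σ i))) := by
    intro k
    have hae : ∀ᵐ z ∂(volume.restrict C), ‖F k z‖
        = |cb b k * t ^ k| * ∏ i : Fin N, g k i (z i) := by
      filter_upwards [ae_restrict_mem hCm] with z hz
      rw [hF', norm_mul, Real.norm_eq_abs, Real.norm_eq_abs,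
        abs_of_nonneg (Finset.prod_nonneg fun i _ => hgnn k z hz i)]
    rw [integral_congr_ae hae, integral_const_mul, (hcube k).2]
    congr 1
    exact Finset.prod_congr rfl fun i _ => hgVal k i
  -- summability of the integrals of the norms
  set M : ℕ → ℝ := fun k => (cb b k * ∏ i : Fin N, cb (σ i) k) * |t| ^ k with hM'
  have hMnn : ∀ k, 0 ≤ M k := by
    intro k
    have h1 := cb_pos hb0 k
    have h2 : (0:ℝ) < ∏ i : Fin N, cb (σ i) k :=
      Finset.prod_pos fun i _ => cb_pos (hσ0 i) k
    positivity
  have hMsum : Summable M := by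
    apply summable_of_ratio_norm_eventually_le hat
    filter_upwards with k
    rw [Real.norm_eq_abs, Real.norm_eq_abs, abs_of_nonneg (hMnn k), abs_of_nonneg (hMnn (k+1))]
    have e : M (k+1) = (((b + k) / (k+1)) * ∏ i : Fin N, ((σ i + k) / (k+1))) * (|t| * M k) := by
      rw [hM']
      simp only [cb_succ, Finset.prod_mul_distrib, pow_succ]
      ring
    rw [e]
    have h1 : ((b + (k:ℝ)) / (k+1)) * ∏ i : Fin N, ((σ i + k) / (k+1)) ≤ 1 := by
      apply mul_le_one₀ (cb_ratio_le hb1' k)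
      · exact Finset.prod_nonneg fun i _ => by have := hσ0 i; positivity
      · exact Finset.prod_le_one (fun i _ => by have := hσ0 i; positivity)
          (fun i _ => cb_ratio_le (hσ1 i).le k)
    have h2 : 0 ≤ |t| * M k := mul_nonneg (abs_nonneg t) (hMnn k)
    calc (((b + k) / (k+1)) * ∏ i : Fin N, ((σ i + k) / (k+1))) * (|t| * M k)
        ≤ 1 * (|t| * M k) := by
          apply mul_le_mul_of_nonneg_right h1 h2
      _ = |t| * M k := one_mul _
  have hnormsum : Summable (fun k => ∫ z in C, ‖F k z‖) := by
    apply Summable.congr ((hMsum.mul_left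
      (∏ i : Fin N, Real.Gamma (σ i) * Real.Gamma (1 - σ i))))
    intro k
    rw [hFnorm k,
      show ∏ i : Fin N, (cb (σ i) k * (Real.Gamma (σ i) * Real.Gamma (1 - σ i)))
          = (∏ i : Fin N, cb (σ i) k) * ∏ i : Fin N, (Real.Gamma (σ i) * Real.Gamma (1 - σ i))
        from Finset.prod_mul_distrib,
      abs_mul, abs_of_pos (cb_pos hb0 k), abs_pow, hM']
    ring
  -- pointwise expansion into the binomial series on the cube
  have hps : ∀ z : Fin N → ℝ, z ∈ C → HasSum (fun k => F k z) (f z) := by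
    intro z hz
    have hzi := hzC z hz
    have hprod0 : 0 < ∏ i : Fin N, z i := Finset.prod_pos fun i _ => (hzi i).1
    have hprod1 : ∏ i : Fin N, z i ≤ 1 :=
      Finset.prod_le_one (fun i _ => (hzi i).1.le) (fun i _ => (hzi i).2.le)
    have hu : |t * ∏ i : Fin N, z i| < 1 := by
      rw [abs_mul, abs_of_pos hprod0]
      calc |t| * ∏ i : Fin N, z i ≤ |t| * 1 := by gcongr
        _ = |t| := mul_one _
        _ < 1 := hat
    have hbs := (binomial_hasSum hb0 hb1' hu).mul_left
      (∏ i : Fin N, (z i) ^ (σ i - 1) * (1 - z i) ^ (-(σ i)))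
    refine hbs.congr_fun fun k => ?_
    have hgsplit : ∀ i : Fin N, g k i (z i)
        = ((z i) ^ (σ i - 1) * (1 - z i) ^ (-(σ i))) * (z i) ^ (k:ℕ) := by
      intro i
      simp only [hg']
      rw [show σ i + (k:ℝ) - 1 = (σ i - 1) + (k:ℝ) by ring, Real.rpow_add (hzi i).1,
        Real.rpow_natCast]
      ring
    simp only [hF']
    rw [Finset.prod_congr rfl (fun i _ => hgsplit i), Finset.prod_mul_distrib,
      Finset.prod_pow, mul_pow]
    ring
  -- the integral identity
  have hHS := hasSum_integral_of_summable_integral_norm (μ := volume.restrict C) hFint hnormsum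
  have htsf : ∫ z in C, (∑' k, F k z) = ∫ z in C, f z := by
    apply integral_congr_ae
    filter_upwards [ae_restrict_mem hCm] with z hz
    exact (hps z hz).tsum_eq
  have hval : ∫ z in C, f z = ∑' k, ∫ z in C, F k z := (hHS.tsum_eq.trans htsf).symm
  constructor
  · -- integrability
    have hmeas : Measurable f := by
      rw [hf']
      apply Measurable.mul
      · apply Finset.measurable_prod
        intro i _
        exact ((measurable_pi_apply i).pow measurable_const).mul
          ((measurable_const.sub (measurable_pi_apply i)).pow measurable_const)
      · exact ((measurable_const.sub (measurable_const.mul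
          (Finset.measurable_prod _ fun i _ => measurable_pi_apply i))).pow measurable_const)
    have hg0Int : ∀ i : Fin N, IntegrableOn
        (fun x : ℝ => x ^ (σ i - 1) * (1 - x) ^ (-(σ i))) (Ioo 0 1) volume := by
      intro i
      have h := (beta_Ioo (σ i) (1 - σ i) (hσ0 i) (by linarith [hσ1 i])).1
      have he : (fun x : ℝ => x ^ (σ i - 1) * (1 - x) ^ ((1 - σ i) - 1))
          = fun x : ℝ => x ^ (σ i - 1) * (1 - x) ^ (-(σ i)) := by
        funext x; norm_num
      rwa [he] at h
    have hbd : IntegrableOn (fun z : Fin N → ℝ =>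
        (∏ i : Fin N, (z i) ^ (σ i - 1) * (1 - z i) ^ (-(σ i))) * (1 - |t|) ^ (-b))
        C volume :=
      ((cube_prod _ hg0Int).1).mul_const _
    apply Integrable.mono' hbd hmeas.aestronglyMeasurable
    filter_upwards [ae_restrict_mem hCm] with z hz
    have hzi := hzC z hz
    have hprod0 : 0 < ∏ i : Fin N, z i := Finset.prod_pos fun i _ => (hzi i).1
    have hprod1 : ∏ i : Fin N, z i ≤ 1 :=
      Finset.prod_le_one (fun i _ => (hzi i).1.le) (fun i _ => (hzi i).2.le)
    have htz : t * ∏ i : Fin N, z i ≤ |t| := by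
      calc t * ∏ i : Fin N, z i ≤ |t * ∏ i : Fin N, z i| := le_abs_self _
        _ = |t| * ∏ i : Fin N, z i := by rw [abs_mul, abs_of_pos hprod0]
        _ ≤ |t| * 1 := by gcongr
        _ = |t| := mul_one _
    have ht1 : 0 < 1 - |t| := by linarith
    have hP : 0 ≤ ∏ i : Fin N, (z i) ^ (σ i - 1) * (1 - z i) ^ (-(σ i)) :=
      Finset.prod_nonneg fun i _ => mul_nonneg (Real.rpow_nonneg (hzi i).1.le _)
        (Real.rpow_nonneg (by linarith [(hzi i).2]) _)
    have hpw : (1 - t * ∏ i : Fin N, z i) ^ (-b) ≤ (1 - |t|) ^ (-b) :=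
      Real.rpow_le_rpow_of_nonpos ht1 (by linarith) (by linarith)
    rw [hf', Real.norm_eq_abs, abs_mul,
      abs_of_nonneg hP, abs_of_nonneg (Real.rpow_nonneg (by linarith) _)]
    exact mul_le_mul_of_nonneg_left hpw hP
  · -- the value
    rw [hval]
    have hterm : ∀ k : ℕ, ∫ z in C, F k z
        = (∏ i : Fin N, Real.Gamma (σ i) * Real.Gamma (1 - σ i)) *
          (((∏ i : Fin N, (ascPochhammer ℝ k).eval (σ i)) * (ascPochhammer ℝ k).eval b) /
            ((k.factorial : ℝ)) ^ (N+1) * t ^ k) := by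
      intro k
      rw [hFval k, Finset.prod_mul_distrib]
      have e1 : ∏ i : Fin N, cb (σ i) k
          = (∏ i : Fin N, (ascPochhammer ℝ k).eval (σ i)) / ((k.factorial : ℝ)) ^ N := by
        simp only [cb]
        rw [Finset.prod_div_distrib, Finset.prod_const, Finset.card_univ, Fintype.card_fin]
      rw [e1, cb]
      ring
    rw [tsum_congr hterm, tsum_mul_left]

/-- The Euler-integral formula: for `ρ₁, …, ρₙ ∈ (0,1)` and `t ∈ (-1,1)`, the
`(n-1)`-fold integral of `(∏ᵢ zᵢ^{ρᵢ-1}(1-zᵢ)^{-ρᵢ})·(1 - t·z₁⋯z_{n-1})^{-ρₙ}` over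
the open unit cube converges and equals
`(∏_{i=1}^{n-1} Γ(ρᵢ)Γ(1-ρᵢ)) · ₙF_{n-1}(ρ₁,…,ρₙ; 1,…,1; t)`. -/
theorem euler_integral_formula (n : ℕ) (hn : 2 ≤ n) (ρ : Fin n → ℝ)
    (hρ : ∀ i, ρ i ∈ Set.Ioo (0 : ℝ) 1) (t : ℝ) (ht : t ∈ Set.Ioo (-1 : ℝ) 1) :
    IntegrableOn
      (fun z : Fin (n - 1) → ℝ =>
        (∏ i : Fin (n - 1), (z i) ^ (ρ (Fin.castLE (Nat.sub_le n 1) i) - 1) *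
          (1 - z i) ^ (-(ρ (Fin.castLE (Nat.sub_le n 1) i)))) *
        (1 - t * ∏ i : Fin (n - 1), z i) ^ (-(ρ ⟨n - 1, by omega⟩)))
      (Set.univ.pi fun _ : Fin (n - 1) => Set.Ioo (0 : ℝ) 1) volume ∧
    ∫ z : Fin (n - 1) → ℝ in Set.univ.pi fun _ : Fin (n - 1) => Set.Ioo (0 : ℝ) 1,
        (∏ i : Fin (n - 1), (z i) ^ (ρ (Fin.castLE (Nat.sub_le n 1) i) - 1) *
          (1 - z i) ^ (-(ρ (Fin.castLE (Nat.sub_le n 1) i)))) *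
        (1 - t * ∏ i : Fin (n - 1), z i) ^ (-(ρ ⟨n - 1, by omega⟩)) =
      (∏ i : Fin (n - 1), Real.Gamma (ρ (Fin.castLE (Nat.sub_le n 1) i)) *
          Real.Gamma (1 - ρ (Fin.castLE (Nat.sub_le n 1) i))) *
        ∑' k : ℕ, (∏ i : Fin n, (ascPochhammer ℝ k).eval (ρ i)) /
          ((k.factorial : ℝ)) ^ n * t ^ k := by
  have hat : |t| < 1 := abs_lt.2 ⟨ht.1, ht.2⟩
  have h := main_aux (N := n - 1) (fun i => ρ (Fin.castLE (Nat.sub_le n 1) i))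
    (fun i => (hρ _).1) (fun i => (hρ _).2)
    (ρ ⟨n - 1, by omega⟩) (hρ _).1 (hρ _).2 t hat
  refine ⟨h.1, h.2.trans ?_⟩
  congr 1
  apply tsum_congr
  intro k
  rw [prod_split (show 1 ≤ n by omega) (fun i => (ascPochhammer ℝ k).eval (ρ i))]
  have hN : n - 1 + 1 = n := by omega
  rw [hN]
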